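/- For any nonnegative sequence (a_t)_{t≥1} with Σ_t a_t = 1 and finite support, Σ_{t=1}^∞ (1 − Σ_{t'<t} (1 − t'(t'+1)/(t(t+1))) a_{t'})² ≤ (4/3) · Σ_{t=1}^∞ t·a_t, where equivalently the right side equals (4/3)·Σ_t (1 − Σ_{t'<t} a_{t'}). -/

import Mathlib

noncomputable def msvcF (t : ℕ) : ℝ := (t : ℝ) * ((t : ℝ) + 1)

lemma msvcF_pos {t : ℕ} (ht : 1 ≤ t) : 0 < msvcF t := by
  have : (1:ℝ) ≤ (t:ℝ) := by exact_mod_cast ht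
  unfold msvcF; nlinarith

lemma msvcF_mono {s t : ℕ} (h : s ≤ t) : msvcF s ≤ msvcF t := by
  have : (s:ℝ) ≤ (t:ℝ) := by exact_mod_cast h
  have hs : (0:ℝ) ≤ (s:ℝ) := by positivity
  unfold msvcF; nlinarith

noncomputable def msvcW (u t : ℕ) : ℝ := min (msvcF u) (msvcF t) / msvcF t

noncomputable def msvcH (u v t : ℕ) : ℝ :=
  if t ≤ u + 1 then (2*(u:ℝ) + 1 - (t:ℝ)) - (2/3) * msvcF u / ((v:ℝ)+1)
  else if t ≤ v + 1 then msvcF u / (t:ℝ) - (2/3) * msvcF u / ((v:ℝ)+1)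
  else msvcF u * msvcF v / (3 * ((t:ℝ)-1) * (t:ℝ)^2)

lemma msvcH_third {u v t : ℕ} (hu : 1 ≤ u) (huv : u ≤ v) (ht : v < t) :
    msvcH u v t = msvcF u * msvcF v / (3 * ((t:ℝ)-1) * (t:ℝ)^2) := by
  rcases eq_or_lt_of_le (Nat.succ_le_of_lt ht) with h | h
  · -- t = v + 1
    have hv1 : (1:ℝ) ≤ (v:ℝ) := by exact_mod_cast le_trans hu huv
    unfold msvcH
    rcases eq_or_lt_of_le huv with rfl | huv'
    · rw [if_pos (le_of_eq h.symm)]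
      rw [← h]
      push_cast
      unfold msvcF
      have hu0 : (u:ℝ) ≠ 0 := (by linarith : (0:ℝ) < u).ne'
      field_simp
      ring_nf
      rw [sq, mul_assoc, mul_inv_cancel₀ hu0, mul_one]
    · have h1 : ¬ (t ≤ u + 1) := by omega
      have h2 : t ≤ v + 1 := by omega
      rw [if_neg h1, if_pos h2, ← h]
      push_cast
      unfold msvcF
      have hv0 : (v:ℝ) ≠ 0 := (by linarith : (0:ℝ) < v).ne'
      field_simp
      ring_nf
      rw [mul_inv_cancel₀ hv0]
  · have h1 : ¬ (t ≤ u + 1) := by omega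
    have h2 : ¬ (t ≤ v + 1) := by omega
    unfold msvcH
    rw [if_neg h1, if_neg h2]

lemma msvcH_step {u v t : ℕ} (hu : 1 ≤ u) (huv : u ≤ v) (ht : 1 ≤ t) :
    msvcW u t * msvcW v t + msvcH u v (t+1) ≤ msvcH u v t := by
  have hfu : 0 < msvcF u := msvcF_pos hu
  have hfv : 0 < msvcF v := msvcF_pos (le_trans hu huv)
  have hft : 0 < msvcF t := msvcF_pos ht
  have hT1 : (1:ℝ) ≤ (t:ℝ) := by exact_mod_cast ht
  rcases le_or_gt t u with h1 | h1
  · -- t ≤ u : both W equal 1, H telescopes exactly by 1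
    have w1 : msvcW u t = 1 := by
      unfold msvcW; rw [min_eq_right (msvcF_mono h1), div_self hft.ne']
    have w2 : msvcW v t = 1 := by
      unfold msvcW; rw [min_eq_right (msvcF_mono (le_trans h1 huv)), div_self hft.ne']
    have e1 : msvcH u v t = (2*(u:ℝ) + 1 - (t:ℝ)) - (2/3) * msvcF u / ((v:ℝ)+1) := by
      unfold msvcH; rw [if_pos (by omega)]
    have e2 : msvcH u v (t+1) = (2*(u:ℝ) + 1 - ((t:ℝ)+1)) - (2/3) * msvcF u / ((v:ℝ)+1) := by
      unfold msvcH; rw [if_pos (by omega)]; push_cast; ring_nf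
    rw [w1, w2, e1, e2]; ring_nf; simp
  · rcases le_or_gt t v with h2 | h2
    · -- u < t ≤ v
      have w1 : msvcW u t = msvcF u / msvcF t := by
        unfold msvcW; rw [min_eq_left (msvcF_mono h1.le)]
      have w2 : msvcW v t = 1 := by
        unfold msvcW; rw [min_eq_right (msvcF_mono h2), div_self hft.ne']
      have e1 : msvcH u v t = msvcF u / (t:ℝ) - (2/3) * msvcF u / ((v:ℝ)+1) := by
        unfold msvcH
        rcases eq_or_lt_of_le (Nat.succ_le_of_lt h1) with h | h
        · rw [if_pos (le_of_eq h.symm), ← h]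
          push_cast
          unfold msvcF
          field_simp
          ring
        · rw [if_neg (by omega), if_pos (by omega)]
      have e2 : msvcH u v (t+1) = msvcF u / ((t:ℝ)+1) - (2/3) * msvcF u / ((v:ℝ)+1) := by
        unfold msvcH; rw [if_neg (by omega), if_pos (by omega)]; push_cast; ring_nf
      rw [w1, w2, e1, e2]
      have : msvcF u / msvcF t = msvcF u / (t:ℝ) - msvcF u / ((t:ℝ)+1) := by
        unfold msvcF
        field_simp
        ring
      rw [this]; ring_nf; simp
    · -- v < t
      have hT2 : (2:ℝ) ≤ (t:ℝ) := by
        have : 2 ≤ t := by omega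
        exact_mod_cast this
      have w1 : msvcW u t = msvcF u / msvcF t := by
        unfold msvcW; rw [min_eq_left (msvcF_mono (le_trans huv h2.le))]
      have w2 : msvcW v t = msvcF v / msvcF t := by
        unfold msvcW; rw [min_eq_left (msvcF_mono h2.le)]
      have e1 : msvcH u v t = msvcF u * msvcF v / (3 * ((t:ℝ)-1) * (t:ℝ)^2) :=
        msvcH_third hu huv h2
      have e2 : msvcH u v (t+1) = msvcF u * msvcF v / (3 * (t:ℝ) * ((t:ℝ)+1)^2) := by
        rw [msvcH_third hu huv (by omega)]
        push_cast; ring_nf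
      rw [w1, w2, e1, e2]
      have key : 1 / msvcF t ^ 2 + 1 / (3 * (t:ℝ) * ((t:ℝ)+1)^2)
          ≤ 1 / (3 * ((t:ℝ)-1) * (t:ℝ)^2) := by
        unfold msvcF
        rw [div_add_div _ _ (by positivity) (by positivity),
          div_le_div_iff₀ (by positivity) (by nlinarith)]
        nlinarith [sq_nonneg ((t:ℝ)+1), sq_nonneg (t:ℝ)]
      have hprod : (0:ℝ) ≤ msvcF u * msvcF v := by positivity
      have := mul_le_mul_of_nonneg_left key hprod
      calc msvcF u / msvcF t * (msvcF v / msvcF t) + msvcF u * msvcF v / (3 * (t:ℝ) * ((t:ℝ)+1)^2)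
          = msvcF u * msvcF v * (1 / msvcF t ^ 2 + 1 / (3 * (t:ℝ) * ((t:ℝ)+1)^2)) := by
            field_simp
        _ ≤ msvcF u * msvcF v * (1 / (3 * ((t:ℝ)-1) * (t:ℝ)^2)) := this
        _ = msvcF u * msvcF v / (3 * ((t:ℝ)-1) * (t:ℝ)^2) := by ring

lemma msvcH_nonneg {u v t : ℕ} (hu : 1 ≤ u) (huv : u ≤ v) (ht : 1 ≤ t) :
    0 ≤ msvcH u v t := by
  have hU : (1:ℝ) ≤ (u:ℝ) := by exact_mod_cast hu
  have hUV : (u:ℝ) ≤ (v:ℝ) := by exact_mod_cast huv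
  have hT1 : (1:ℝ) ≤ (t:ℝ) := by exact_mod_cast ht
  unfold msvcH
  split_ifs with h1 h2
  · have hTu : (t:ℝ) ≤ (u:ℝ)+1 := by exact_mod_cast h1
    rw [sub_nonneg, div_le_iff₀ (by linarith)]
    unfold msvcF
    nlinarith
  · have hTv : (t:ℝ) ≤ (v:ℝ)+1 := by exact_mod_cast h2
    rw [sub_nonneg, div_le_div_iff₀ (by linarith) (by linarith)]
    have hfu : (0:ℝ) < msvcF u := msvcF_pos hu
    nlinarith
  · have h3 : v + 1 < t := by omega
    have : (2:ℝ) ≤ (t:ℝ) := by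
      have : 2 ≤ t := by omega
      exact_mod_cast this
    have hfu : (0:ℝ) < msvcF u := msvcF_pos hu
    have hfv : (0:ℝ) < msvcF v := msvcF_pos (le_trans hu huv)
    apply div_nonneg (by positivity)
    nlinarith

lemma msvc_core {u v : ℕ} (hu : 1 ≤ u) (huv : u ≤ v) (n : ℕ) :
    ∑ i ∈ Finset.range n, msvcW u (i+1) * msvcW v (i+1) ≤ 2/3 * ((u:ℝ) + (v:ℝ)) := by
  have key : ∀ m : ℕ, ∑ i ∈ Finset.range m, msvcW u (i+1) * msvcW v (i+1)
      ≤ msvcH u v 1 - msvcH u v (m+1) := by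
    intro m
    induction m with
    | zero => simp
    | succ m ih =>
      rw [Finset.sum_range_succ]
      have := msvcH_step hu huv (t := m+1) (by omega)
      linarith
  have h1 := key n
  have h2 := msvcH_nonneg hu huv (t := n+1) (by omega)
  have h3 : msvcH u v 1 ≤ 2/3 * ((u:ℝ) + (v:ℝ)) := by
    unfold msvcH
    rw [if_pos (by omega)]
    have hU : (1:ℝ) ≤ (u:ℝ) := by exact_mod_cast hu
    have hUV : (u:ℝ) ≤ (v:ℝ) := by exact_mod_cast huv
    rw [sub_le_iff_le_add, ← sub_le_iff_le_add']
    rw [le_div_iff₀ (by linarith)]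
    unfold msvcF
    nlinarith [sq_nonneg ((v:ℝ) - (u:ℝ))]
  linarith

lemma msvc_core' {u v : ℕ} (hu : 1 ≤ u) (hv : 1 ≤ v) (n : ℕ) :
    ∑ i ∈ Finset.range n, msvcW u (i+1) * msvcW v (i+1) ≤ 2/3 * ((u:ℝ) + (v:ℝ)) := by
  rcases le_total u v with h | h
  · exact msvc_core hu h n
  · have := msvc_core hv h n
    simpa [mul_comm, add_comm] using this

open Finset

lemma msvc_S_eq (a : ℕ → ℝ) (N : ℕ) (hN : ∀ m, N ≤ m → a m = 0)
    (hsum' : ∑ j ∈ Finset.range N, a (j+1) = 1) (t : ℕ) (ht : 1 ≤ t) :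
    1 - ∑ t' ∈ Finset.Ico 1 t,
        (1 - ((t' : ℝ) * ((t' : ℝ) + 1)) / ((t : ℝ) * ((t : ℝ) + 1))) * a t'
      = ∑ j ∈ Finset.range N, msvcW (j+1) t * a (j+1) := by
  have hft : 0 < msvcF t := msvcF_pos ht
  set φ : ℕ → ℝ := fun j => (if j+1 < t then 1 - msvcF (j+1) / msvcF t else 0) * a (j+1) with hφ
  have h1 : ∑ t' ∈ Finset.Ico 1 t,
      (1 - ((t' : ℝ) * ((t' : ℝ) + 1)) / ((t : ℝ) * ((t : ℝ) + 1))) * a t'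
      = ∑ j ∈ Finset.range (t-1), φ j := by
    rw [Finset.sum_Ico_eq_sum_range]
    apply Finset.sum_congr rfl
    intro j hj
    have hjt : j + 1 < t := by
      simp only [Finset.mem_range] at hj; omega
    have h1j : 1 + j = j + 1 := by omega
    rw [hφ]
    simp only [h1j, if_pos hjt, msvcF]
  have h2 : ∑ j ∈ Finset.range (t-1), φ j = ∑ j ∈ Finset.range (max (t-1) N), φ j := by
    apply Finset.sum_subset (Finset.range_subset_range.2 (le_max_left _ _))
    intro j _ hj
    have : ¬ (j + 1 < t) := by simp only [Finset.mem_range] at hj; omega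
    simp [hφ, this]
  have h3 : ∑ j ∈ Finset.range N, φ j = ∑ j ∈ Finset.range (max (t-1) N), φ j := by
    apply Finset.sum_subset (Finset.range_subset_range.2 (le_max_right _ _))
    intro j _ hj
    have : a (j+1) = 0 := hN _ (by simp only [Finset.mem_range] at hj; omega)
    simp [hφ, this]
  rw [h1, h2, ← h3, ← hsum', ← Finset.sum_sub_distrib]
  apply Finset.sum_congr rfl
  intro j _
  simp only [hφ]
  by_cases hjt : j + 1 < t
  · rw [if_pos hjt]
    have : msvcW (j+1) t = msvcF (j+1) / msvcF t := by
      unfold msvcW; rw [min_eq_left (msvcF_mono (by omega))]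
    rw [this]; ring
  · rw [if_neg hjt]
    have : msvcW (j+1) t = 1 := by
      unfold msvcW; rw [min_eq_right (msvcF_mono (by omega)), div_self hft.ne']
    rw [this]; ring

theorem msvc_main_inequality
    (a : ℕ → ℝ) (hnn : ∀ t, 0 ≤ a t)
    (hfin : (Function.support a).Finite)
    (hsum : ∑' t : ℕ+, a (t : ℕ) = 1) :
    ∑' t : ℕ+, (1 - ∑ t' ∈ Finset.Ico 1 (t : ℕ),
        (1 - ((t' : ℝ) * ((t' : ℝ) + 1)) / ((t : ℝ) * ((t : ℝ) + 1))) * a t') ^ 2 ≤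
      (4 / 3) * ∑' t : ℕ+, (t : ℝ) * a (t : ℕ) := by
  obtain ⟨N, hN⟩ : ∃ N, ∀ m, N ≤ m → a m = 0 := by
    refine ⟨hfin.toFinset.sup id + 1, fun m hm => ?_⟩
    by_contra h
    have : m ∈ hfin.toFinset := by simpa using h
    have h2 := Finset.le_sup (f := id) this
    simp only [id_eq] at h2
    omega
  -- convert pnat tsums to nat tsums
  have pnat_eq : ∀ F : ℕ+ → ℝ, ∑' t : ℕ+, F t = ∑' n : ℕ, F (n.succPNat) := fun F =>
    (Equiv.pnatEquivNat.symm.tsum_eq F).symm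
  have hsum' : ∑ j ∈ Finset.range N, a (j+1) = 1 := by
    rw [← hsum, pnat_eq]
    rw [tsum_eq_sum (s := Finset.range N) (fun n hn => by
      show a (n+1) = 0
      exact hN _ (by simp only [Finset.mem_range, not_lt] at hn; omega))]
    rfl
  have rhs_eq : ∑' t : ℕ+, (t : ℝ) * a (t : ℕ)
      = ∑ j ∈ Finset.range N, ((j:ℝ)+1) * a (j+1) := by
    rw [pnat_eq]
    rw [tsum_eq_sum (s := Finset.range N) (fun n hn => by
      have h0 : a (n+1) = 0 := hN _ (by
        simp only [Finset.mem_range, not_lt] at hn; omega)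
      show ((n+1:ℕ):ℝ) * a (n+1) = 0
      rw [h0, mul_zero])]
    apply Finset.sum_congr rfl
    intro j _
    show ((j+1:ℕ):ℝ) * a (j+1) = _
    push_cast
    ring
  have lhs_eq : ∑' t : ℕ+, (1 - ∑ t' ∈ Finset.Ico 1 (t : ℕ),
        (1 - ((t' : ℝ) * ((t' : ℝ) + 1)) / ((t : ℝ) * ((t : ℝ) + 1))) * a t') ^ 2
      = ∑' n : ℕ, (∑ j ∈ Finset.range N, msvcW (j+1) (n+1) * a (j+1)) ^ 2 := by
    rw [pnat_eq]
    apply tsum_congr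
    intro n
    have h := msvc_S_eq a N hN hsum' (n+1) (by omega)
    rw [← h]
    rfl
  rw [lhs_eq, rhs_eq]
  apply Real.tsum_le_of_sum_range_le (fun n => sq_nonneg _)
  intro n
  -- finite double sum bound
  have expand : ∀ i ∈ Finset.range n,
      (∑ j ∈ Finset.range N, msvcW (j+1) (i+1) * a (j+1)) ^ 2
      = ∑ j ∈ Finset.range N, ∑ k ∈ Finset.range N,
          (a (j+1) * a (k+1)) * (msvcW (j+1) (i+1) * msvcW (k+1) (i+1)) := by
    intro i _
    rw [sq, Finset.sum_mul_sum]
    apply Finset.sum_congr rfl; intro j _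
    apply Finset.sum_congr rfl; intro k _
    ring
  rw [Finset.sum_congr rfl expand, Finset.sum_comm]
  have swap : ∑ j ∈ Finset.range N, ∑ i ∈ Finset.range n, ∑ k ∈ Finset.range N,
        (a (j+1) * a (k+1)) * (msvcW (j+1) (i+1) * msvcW (k+1) (i+1))
      = ∑ j ∈ Finset.range N, ∑ k ∈ Finset.range N,
        (a (j+1) * a (k+1)) * ∑ i ∈ Finset.range n, msvcW (j+1) (i+1) * msvcW (k+1) (i+1) := by
    apply Finset.sum_congr rfl; intro j _
    rw [Finset.sum_comm]
    apply Finset.sum_congr rfl; intro k _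
    rw [Finset.mul_sum]
  rw [swap]
  have bound : ∑ j ∈ Finset.range N, ∑ k ∈ Finset.range N,
        (a (j+1) * a (k+1)) * ∑ i ∈ Finset.range n, msvcW (j+1) (i+1) * msvcW (k+1) (i+1)
      ≤ ∑ j ∈ Finset.range N, ∑ k ∈ Finset.range N,
        (a (j+1) * a (k+1)) * (2/3 * (((j:ℝ)+1) + ((k:ℝ)+1))) := by
    apply Finset.sum_le_sum; intro j _
    apply Finset.sum_le_sum; intro k _
    apply mul_le_mul_of_nonneg_left _ (mul_nonneg (hnn _) (hnn _))
    have := msvc_core' (u := j+1) (v := k+1) (by omega) (by omega) n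
    push_cast at this ⊢
    convert this using 2
  refine le_trans bound ?_
  set T : ℝ := ∑ j ∈ Finset.range N, ((j:ℝ)+1) * a (j+1) with hT
  have inner : ∀ j ∈ Finset.range N,
      ∑ k ∈ Finset.range N, (a (j+1) * a (k+1)) * (2/3 * (((j:ℝ)+1) + ((k:ℝ)+1)))
      = a (j+1) * (2/3 * (((j:ℝ)+1) + T)) := by
    intro j _
    have step : ∀ k ∈ Finset.range N,
        (a (j+1) * a (k+1)) * (2/3 * (((j:ℝ)+1) + ((k:ℝ)+1)))
        = (a (j+1) * (2/3 * ((j:ℝ)+1))) * a (k+1)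
          + (a (j+1) * (2/3)) * (((k:ℝ)+1) * a (k+1)) := fun k _ => by ring
    rw [Finset.sum_congr rfl step, Finset.sum_add_distrib, ← Finset.mul_sum, ← Finset.mul_sum,
      hsum', ← hT]
    ring
  rw [Finset.sum_congr rfl inner]
  have final : ∑ j ∈ Finset.range N, a (j+1) * (2/3 * (((j:ℝ)+1) + T)) = 4/3 * T := by
    have step : ∀ j ∈ Finset.range N,
        a (j+1) * (2/3 * (((j:ℝ)+1) + T))
        = 2/3 * (((j:ℝ)+1) * a (j+1)) + (2/3 * T) * a (j+1) := fun j _ => by ring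
    rw [Finset.sum_congr rfl step, Finset.sum_add_distrib, ← Finset.mul_sum, ← Finset.mul_sum,
      hsum', ← hT]
    ring
  rw [final]
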